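/- Let 𝔫 be a finite-dimensional nilpotent Lie algebra over ℂ and let ρ : 𝔫 → M_n(ℂ) be a Lie algebra homomorphism. Let x_1, …, x_k ∈ 𝔫 and for each i let S_i be the semisimple part of ρ(x_i) (so ρ(x_i) = S_i + N_i with S_i diagonalizable, N_i nilpotent, S_i N_i = N_i S_i). Then Tr(ρ(x_1) ρ(x_2) ⋯ ρ(x_k)) = Tr(S_1 S_2 ⋯ S_k). -/

import Mathlib

open Polynomial Set

section AuxGeneral

variable {R M : Type*} [CommRing R] [AddCommGroup M] [Module R M]

lemma aux_mapsTo_ofFn_prod {k : ℕ} (g : Fin k → Module.End R M) {p : Submodule R M}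
    (hg : ∀ i, MapsTo (g i) p p) : MapsTo ((List.ofFn g).prod) p p := by
  induction k with
  | zero => intro m hm; simpa using hm
  | succ k ih =>
    rw [List.ofFn_succ, List.prod_cons]
    intro m hm
    have h1 := ih (fun i => g i.succ) (fun i => hg i.succ) hm
    simpa [Module.End.mul_apply] using hg 0 h1

lemma aux_restrict_ofFn_prod {k : ℕ} (g : Fin k → Module.End R M) {p : Submodule R M}
    (hg : ∀ i, MapsTo (g i) p p)
    (H : MapsTo ((List.ofFn g).prod) p p) :
    ((List.ofFn g).prod).restrict H = (List.ofFn fun i => (g i).restrict (hg i)).prod := by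
  induction k with
  | zero =>
    ext m
    simp [LinearMap.restrict_apply]
  | succ k ih =>
    have h1 : MapsTo ((List.ofFn fun i => g i.succ).prod) p p :=
      aux_mapsTo_ofFn_prod _ (fun i => hg i.succ)
    have hexp : (List.ofFn g).prod = g 0 * (List.ofFn fun i => g i.succ).prod := by
      rw [List.ofFn_succ, List.prod_cons]
    have H' : MapsTo (g 0 * (List.ofFn fun i => g i.succ).prod) p p := hexp ▸ H
    have step : ((List.ofFn g).prod).restrict H =
        ((g 0).restrict (hg 0)) * (((List.ofFn fun i => g i.succ).prod).restrict h1) := by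
      ext m
      simp only [LinearMap.restrict_apply, Module.End.mul_apply, hexp]
      rfl
    rw [step, ih (fun i => g i.succ) (fun i => hg i.succ) h1]
    rw [show (List.ofFn fun i => (g i).restrict (hg i)) =
        ((g 0).restrict (hg 0)) :: (List.ofFn fun i : Fin k => (g i.succ).restrict (hg i.succ))
      from List.ofFn_succ, List.prod_cons]

lemma aux_sub_smul_prod_mem {F : ℕ → Submodule R M} (hF : ∀ j, F (j + 1) ≤ F j) :
    ∀ (k : ℕ) (c : Fin k → R) (g : Fin k → Module.End R M),
      (∀ i j, ∀ m ∈ F j, g i m - c i • m ∈ F (j + 1)) →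
      ∀ j, ∀ m ∈ F j, (List.ofFn g).prod m - (∏ i, c i) • m ∈ F (j + 1) := by
  intro k
  induction k with
  | zero =>
    intro c g hg j m hm
    simp only [List.ofFn_zero, List.prod_nil, Finset.univ_eq_empty, Finset.prod_empty,
      Module.End.one_apply, one_smul, sub_self]
    exact (F (j + 1)).zero_mem
  | succ k ih =>
    intro c g hg j m hm
    have hge : ∀ i j', ∀ v ∈ F j', g i v ∈ F j' := by
      intro i j' v hv
      have h' := hg i j' v hv
      have hrw : g i v = (g i v - c i • v) + c i • v := by abel
      rw [hrw]
      exact (F j').add_mem (hF j' h') ((F j').smul_mem _ hv)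
    have h1 := ih (fun i => c i.succ) (fun i => g i.succ) (fun i => hg i.succ) j m hm
    have key : (List.ofFn g).prod m - (∏ i, c i) • m
        = g 0 ((List.ofFn fun i => g i.succ).prod m - (∏ i : Fin k, c i.succ) • m)
          + (∏ i : Fin k, c i.succ) • (g 0 m - c 0 • m) := by
      rw [List.ofFn_succ, List.prod_cons, Fin.prod_univ_succ, Module.End.mul_apply, map_sub,
        map_smul, smul_sub, smul_smul, mul_comm (c 0)]
      abel
    rw [key]
    exact (F (j + 1)).add_mem (hge 0 (j + 1) _ h1)
      ((F (j + 1)).smul_mem _ (hg 0 j m hm))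

lemma aux_pow_eq_zero {F : ℕ → Submodule R M} {D : Module.End R M}
    (hD : ∀ j, ∀ m ∈ F j, D m ∈ F (j + 1)) (h0 : F 0 = ⊤) {m : ℕ} (hm : F m = ⊥) :
    D ^ m = 0 := by
  have key : ∀ t j, ∀ v ∈ F j, (D ^ t) v ∈ F (j + t) := by
    intro t
    induction t with
    | zero => intro j v hv; simpa using hv
    | succ t ih =>
      intro j v hv
      rw [pow_succ, Module.End.mul_apply]
      have h2 := ih (j + 1) (D v) (hD j v hv)
      rwa [show j + 1 + t = j + (t + 1) by omega] at h2
  ext v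
  have hv : v ∈ F 0 := by rw [h0]; trivial
  have := key m 0 v hv
  rw [zero_add, hm] at this
  simpa using this

lemma aux_mapsTo_aeval {f : Module.End R M} {p : Submodule R M} (hf : MapsTo f p p)
    (q : R[X]) : MapsTo (aeval f q) p p := by
  induction q using Polynomial.induction_on' with
  | add a b ha hb =>
    intro v hv
    rw [map_add, LinearMap.add_apply]
    exact p.add_mem (ha hv) (hb hv)
  | monomial d a =>
    intro v hv
    have hp : (f ^ d) v ∈ p := Module.End.pow_apply_mem_of_forall_mem d (fun x hx => hf hx) v hv
    rw [aeval_monomial, Module.End.mul_apply, Module.algebraMap_end_apply]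
    exact p.smul_mem _ hp

lemma aux_commute_aeval {A : Type*} [Ring A] [Algebra R A] {f g : A} (h : Commute f g)
    (q : R[X]) : Commute f (aeval g q) := by
  induction q using Polynomial.induction_on' with
  | add a b ha hb => rw [map_add]; exact ha.add_right hb
  | monomial d a =>
    rw [aeval_monomial]
    exact (Algebra.commute_algebraMap_right a f).mul_right (h.pow_right d)

lemma aux_aeval_conj {A : Type*} [Ring A] [Algebra R A] (u : Aˣ) (a : A) (q : R[X]) :
    aeval ((↑u⁻¹ : A) * a * (u : A)) q = (↑u⁻¹ : A) * aeval a q * (u : A) := by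
  let φ : A →ₐ[R] A :=
    { toFun := fun y => (↑u⁻¹ : A) * y * (u : A)
      map_one' := by simp
      map_mul' := fun y z => by
        simp only [mul_assoc]
        rw [Units.mul_inv_cancel_left]
      map_zero' := by simp
      map_add' := fun y z => by simp [mul_add, add_mul]
      commutes' := fun r => by
        show (↑u⁻¹ : A) * algebraMap R A r * (u : A) = algebraMap R A r
        rw [mul_assoc, Algebra.commutes r (u : A), ← mul_assoc, Units.inv_mul, one_mul] }
  exact aeval_algHom_apply φ a q

lemma aux_prod_smul_one {k : ℕ} (c : Fin k → R) :
    (List.ofFn fun i => c i • (1 : Module.End R M)).prod = (∏ i, c i) • 1 := by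
  induction k with
  | zero => simp
  | succ k ih =>
    rw [show (List.ofFn fun i : Fin (k + 1) => c i • (1 : Module.End R M)) =
        (c 0 • 1) :: (List.ofFn fun i : Fin k => c i.succ • (1 : Module.End R M))
      from List.ofFn_succ, List.prod_cons, ih (fun i => c i.succ), Fin.prod_univ_succ]
    rw [smul_mul_smul_comm, one_mul]

end AuxGeneral

section AuxField

variable {K V : Type*} [Field K] [AddCommGroup V] [Module K V]

lemma aux_trace_ofFn_prod [FiniteDimensional K V]
    {F : ℕ → Submodule K V} (hF : ∀ j, F (j + 1) ≤ F j) (h0 : F 0 = ⊤) {m : ℕ}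
    (hm : F m = ⊥) {k : ℕ} (c : Fin k → K) (g : Fin k → Module.End K V)
    (hg : ∀ i j, ∀ v ∈ F j, g i v - c i • v ∈ F (j + 1)) :
    LinearMap.trace K V ((List.ofFn g).prod) = (∏ i, c i) * (Module.finrank K V : K) := by
  set P := (List.ofFn g).prod with hP
  have hD : ∀ j, ∀ v ∈ F j, (P - (∏ i, c i) • 1) v ∈ F (j + 1) := by
    intro j v hv
    simpa using aux_sub_smul_prod_mem hF k c g hg j v hv
  have hnil : IsNilpotent (P - (∏ i, c i) • (1 : Module.End K V)) :=
    ⟨m, aux_pow_eq_zero hD h0 hm⟩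
  have htr : LinearMap.trace K V (P - (∏ i, c i) • 1) = 0 :=
    (LinearMap.isNilpotent_trace_of_isNilpotent hnil).eq_zero
  rw [map_sub, map_smul, LinearMap.trace_one, sub_eq_zero] at htr
  rw [htr, smul_eq_mul]

lemma aux_jordan_unique [FiniteDimensional K V] [PerfectField K]
    {s n s' n' : Module.End K V} (h : s + n = s' + n')
    (hs : s.IsSemisimple) (hs' : s'.IsSemisimple) (hn : IsNilpotent n)
    (hn' : IsNilpotent n') (hss' : Commute s s') (hnn' : Commute n n') : s = s' := by
  have h1 : (s - s').IsSemisimple := Module.End.IsSemisimple.sub_of_commute hss' hs hs'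
  have h2 : IsNilpotent (n' - n) := hnn'.symm.isNilpotent_sub hn' hn
  have h3 : s - s' = n' - n := by
    rw [sub_eq_sub_iff_add_eq_add, h, add_comm]
  rw [h3] at h1
  have h4 := Module.End.eq_zero_of_isNilpotent_isSemisimple h2 h1
  rw [← h3] at h4
  exact sub_eq_zero.mp h4

end AuxField

section AuxMatrix

lemma aux_aeval_diagonal {m : ℕ} (d : Fin m → ℂ) (q : ℂ[X]) :
    aeval (Matrix.diagonal d) q = Matrix.diagonal (fun i => q.eval (d i)) := by
  let φ : (Fin m → ℂ) →ₐ[ℂ] Matrix (Fin m) (Fin m) ℂ :=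
    { Matrix.diagonalRingHom (Fin m) ℂ with commutes' := fun r => rfl }
  have h1 : aeval (φ d) q = φ (aeval d q) := aeval_algHom_apply φ d q
  have h2 : (aeval d q : Fin m → ℂ) = fun i => q.eval (d i) := by
    funext i
    have := aeval_algHom_apply (Pi.evalAlgHom ℂ (fun _ : Fin m => ℂ) i) d q
    rw [← Polynomial.coe_aeval_eq_eval]; exact this.symm
  have h3 : φ d = Matrix.diagonal d := rfl
  rw [← h3, h1, h2]
  rfl

lemma aux_isSemisimple_of_isDiagonalizable {n : ℕ} {A : Matrix (Fin n) (Fin n) ℂ}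
    (h : ∃ P : Matrix (Fin n) (Fin n) ℂ, IsUnit P ∧ (P * A * P⁻¹).IsDiag) :
    Module.End.IsSemisimple (Matrix.toLinAlgEquiv' A) := by
  obtain ⟨P, hP, hdiag⟩ := h
  obtain ⟨u, rfl⟩ := hP
  have hcu : ((u : Matrix (Fin n) (Fin n) ℂ))⁻¹ = (↑u⁻¹ : Matrix (Fin n) (Fin n) ℂ) :=
    (Matrix.coe_units_inv u).symm
  set D := (u : Matrix (Fin n) (Fin n) ℂ) * A * (↑u : Matrix (Fin n) (Fin n) ℂ)⁻¹ with hD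
  set p : ℂ[X] := ∏ c ∈ Finset.image (fun i => D i i) Finset.univ, (X - C c) with hp
  have hsq : Squarefree p :=
    (Polynomial.separable_prod_X_sub_C_iff'.mpr (fun x _ y _ hxy => hxy)).squarefree
  have hDdiag : Matrix.diagonal D.diag = D := hdiag.diagonal_diag
  have haevalD : aeval D p = 0 := by
    rw [← hDdiag, aux_aeval_diagonal]
    have : ∀ i, p.eval (D.diag i) = 0 := by
      intro i
      rw [hp, Polynomial.eval_prod]
      refine Finset.prod_eq_zero (Finset.mem_image_of_mem _ (Finset.mem_univ i)) ?_
      simp [Matrix.diag]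
    simp only [this]
    exact Matrix.diagonal_zero
  have hA : A = (↑u⁻¹ : Matrix (Fin n) (Fin n) ℂ) * D * (u : Matrix (Fin n) (Fin n) ℂ) := by
    rw [hD, hcu]
    rw [← mul_assoc, ← mul_assoc, Units.inv_mul, one_mul, mul_assoc, Units.inv_mul, mul_one]
  have haevalA : aeval A p = 0 := by
    rw [hA, aux_aeval_conj, haevalD, mul_zero, zero_mul]
  have haevalEnd : aeval (Matrix.toLinAlgEquiv' A) p = 0 := by
    rw [aeval_algHom_apply (Matrix.toLinAlgEquiv' (R := ℂ) (n := Fin n) : Matrix (Fin n) (Fin n) ℂ ≃ₐ[ℂ] _) A p]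
    · rw [haevalA, map_zero]
  exact Module.End.isSemisimple_of_squarefree_aeval_eq_zero hsq haevalEnd

lemma aux_trace_toLinAlgEquiv' {n : ℕ} (B : Matrix (Fin n) (Fin n) ℂ) :
    LinearMap.trace ℂ (Fin n → ℂ) (Matrix.toLinAlgEquiv' B) = B.trace := by
  rw [LinearMap.trace_eq_matrix_trace ℂ (Pi.basisFun ℂ (Fin n)), LinearMap.toMatrix_eq_toMatrix']
  congr 1
  exact LinearMap.toMatrix'_toLin' B

end AuxMatrix

/-- A complex square matrix is diagonalizable (semisimple) if it is conjugate to a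
diagonal matrix. -/
def Matrix.IsDiagonalizable {n : ℕ} (A : Matrix (Fin n) (Fin n) ℂ) : Prop :=
  ∃ P : Matrix (Fin n) (Fin n) ℂ, IsUnit P ∧ (P * A * P⁻¹).IsDiag

attribute [local instance 100] LieRing.ofAssociativeRing

set_option maxHeartbeats 2000000 in
set_option synthInstance.maxHeartbeats 400000 in
/-- Let `ρ` be a matrix representation of a finite-dimensional nilpotent complex Lie
algebra `𝔫`, let `x 1, …, x k ∈ 𝔫` and let `S i` be the semisimple part of `ρ (x i)`.
Then `Tr(ρ(x₁) ⋯ ρ(x_k)) = Tr(S₁ ⋯ S_k)`. -/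
theorem trace_prod_eq_trace_prod_semisimpleParts {L : Type*} [LieRing L]
    [LieAlgebra ℂ L] [FiniteDimensional ℂ L] [LieRing.IsNilpotent L] {n : ℕ}
    (ρ : L →ₗ⁅ℂ⁆ Matrix (Fin n) (Fin n) ℂ) (k : ℕ) (x : Fin k → L)
    (S N : Fin k → Matrix (Fin n) (Fin n) ℂ)
    (hdec : ∀ i, ρ (x i) = S i + N i)
    (hS : ∀ i, (S i).IsDiagonalizable) (hN : ∀ i, IsNilpotent (N i))
    (hSN : ∀ i, S i * N i = N i * S i) :
    Matrix.trace ((List.ofFn fun i => ρ (x i)).prod) =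
      Matrix.trace ((List.ofFn fun i => S i).prod) := by
  classical
  let T : Matrix (Fin n) (Fin n) ℂ ≃ₐ[ℂ] Module.End ℂ (Fin n → ℂ) := Matrix.toLinAlgEquiv'
  let φ : L →ₗ⁅ℂ⁆ Module.End ℂ (Fin n → ℂ) :=
    ((lieEquivMatrix' (R := ℂ) (n := Fin n)).symm.toLieHom).comp ρ
  letI : LieRingModule L (Fin n → ℂ) := LieRingModule.compLieHom _ φ
  letI : LieModule ℂ L (Fin n → ℂ) := LieModule.compLieHom _ φ
  set W : (L → ℂ) → Submodule ℂ (Fin n → ℂ) :=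
    fun χ => (LieModule.genWeightSpace (Fin n → ℂ) χ).toSubmodule with hWdef
  have hWmapsTo : ∀ (χ : L → ℂ) (y : L), Set.MapsTo (T (ρ y)) (W χ) (W χ) := by
    intro χ y v hv
    exact (LieModule.genWeightSpace (Fin n → ℂ) χ).lie_mem hv
  have hTSN : ∀ i, Commute (T (S i)) (T (N i)) := by
    intro i
    unfold Commute SemiconjBy
    rw [← map_mul, ← map_mul, hSN i]
  have hTρ : ∀ i, T (ρ (x i)) = T (S i) + T (N i) := fun i => by rw [hdec i, map_add]
  have hTSss : ∀ i, Module.End.IsSemisimple (T (S i)) := fun i =>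
    aux_isSemisimple_of_isDiagonalizable (hS i)
  have hTNnil : ∀ i, IsNilpotent (T (N i)) := fun i => (hN i).map T
  have hcommSA : ∀ i, Commute (T (S i)) (T (ρ (x i))) := fun i => by
    rw [hTρ i]; exact (Commute.refl _).add_right (hTSN i)
  have hcommNA : ∀ i, Commute (T (N i)) (T (ρ (x i))) := fun i => by
    rw [hTρ i]; exact ((hTSN i).symm).add_right (Commute.refl _)
  have hSadj : ∀ i, T (S i) ∈ Algebra.adjoin ℂ {T (ρ (x i))} := by
    intro i
    obtain ⟨N', hN'mem, S', hS'mem, hN'nil, hS'ss, hsum⟩ :=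
      Module.End.exists_isNilpotent_isSemisimple (f := T (ρ (x i)))
    rw [Algebra.adjoin_singleton_eq_range_aeval] at hS'mem hN'mem ⊢
    obtain ⟨q, hq⟩ := hS'mem
    obtain ⟨r, hr⟩ := hN'mem
    have hcomm1 : Commute (T (S i)) S' := by
      rw [← hq]; exact aux_commute_aeval (hcommSA i) q
    have hcomm2 : Commute (T (N i)) N' := by
      rw [← hr]; exact aux_commute_aeval (hcommNA i) r
    have heq : T (S i) + T (N i) = S' + N' := by
      rw [← hTρ i, hsum, add_comm]
    have hfin : T (S i) = S' :=
      aux_jordan_unique heq (hTSss i) hS'ss (hTNnil i) hN'nil hcomm1 hcomm2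
    rw [hfin]
    exact ⟨q, hq⟩
  have hSmapsTo : ∀ (i : Fin k) (χ : L → ℂ), Set.MapsTo (T (S i)) (W χ) (W χ) := by
    intro i χ
    have hmem := hSadj i
    rw [Algebra.adjoin_singleton_eq_range_aeval] at hmem
    obtain ⟨q, hq⟩ := hmem
    rw [← hq]
    exact aux_mapsTo_aeval (hWmapsTo χ (x i)) q
  have hNmapsTo : ∀ (i : Fin k) (χ : L → ℂ), Set.MapsTo (T (N i)) (W χ) (W χ) := by
    intro i χ
    have hTN : T (N i) = T (ρ (x i)) - T (S i) := by rw [hTρ i]; abel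
    rw [hTN]
    intro v hv
    exact (W χ).sub_mem (hWmapsTo χ (x i) hv) (hSmapsTo i χ hv)
  -- the per-weight-space equality of traces
  have main : ∀ χ : L → ℂ,
      ∀ (HA : Set.MapsTo ((List.ofFn fun i => T (ρ (x i))).prod) (W χ) (W χ))
        (HS : Set.MapsTo ((List.ofFn fun i => T (S i)).prod) (W χ) (W χ)),
        LinearMap.trace ℂ (W χ) (((List.ofFn fun i => T (ρ (x i))).prod).restrict HA)
          = LinearMap.trace ℂ (W χ) (((List.ofFn fun i => T (S i)).prod).restrict HS) := by
    intro χ HA HS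
    have hrestrict_toEnd : ∀ (i : Fin k),
        (T (ρ (x i))).restrict (hWmapsTo χ (x i))
          = LieModule.toEnd ℂ L (LieModule.genWeightSpace (Fin n → ℂ) χ) (x i) :=
      fun i => LinearMap.ext fun v => Subtype.ext rfl
    -- the semisimple part acts on the weight space as the scalar χ (x i)
    have hresS : ∀ i, (T (S i)).restrict (hSmapsTo i χ) = χ (x i) • (1 : Module.End ℂ (W χ)) := by
      intro i
      set aR := (T (ρ (x i))).restrict (hWmapsTo χ (x i)) with haRdef
      have hnilshift : IsNilpotent (aR - χ (x i) • (1 : Module.End ℂ (W χ))) := by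
        rw [haRdef, hrestrict_toEnd i]
        have h := LieModule.isNilpotent_toEnd_sub_algebraMap (Fin n → ℂ) χ (x i)
        rwa [Module.algebraMap_end_eq_smul_id] at h
      have hsum : (T (S i)).restrict (hSmapsTo i χ) + (T (N i)).restrict (hNmapsTo i χ) = aR := by
        refine LinearMap.ext fun v => Subtype.ext ?_
        show T (S i) v.1 + T (N i) v.1 = T (ρ (x i)) v.1
        rw [hTρ i]; simp
      have hinvt : W χ ∈ (T (S i)).invtSubmodule :=
        (Module.End.mem_invtSubmodule (T (S i))).mpr (fun v hv => hSmapsTo i χ hv)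
      have hsss : Module.End.IsSemisimple ((T (S i)).restrict (hSmapsTo i χ)) :=
        (hTSss i).restrict hinvt
      have hsss' : Module.End.IsSemisimple (χ (x i) • (1 : Module.End ℂ (W χ))) := by
        have h1 : (1 : Module.End ℂ (W χ)) = LinearMap.id := rfl
        rw [h1]
        exact Module.End.IsSemisimple_smul _ Module.End.isSemisimple_id
      have hnres : IsNilpotent ((T (N i)).restrict (hNmapsTo i χ)) := by
        obtain ⟨d, hd⟩ := hTNnil i
        refine ⟨d, ?_⟩
        refine (Module.End.pow_restrict d (hNmapsTo i χ)).trans ?_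
        ext v
        simp [LinearMap.restrict_apply, hd]
      have hc1 : Commute ((T (S i)).restrict (hSmapsTo i χ)) (χ (x i) • (1 : Module.End ℂ (W χ))) :=
        Commute.smul_right (Commute.one_right _) _
      have hc2 : Commute ((T (N i)).restrict (hNmapsTo i χ)) (aR - χ (x i) • (1 : Module.End ℂ (W χ))) := by
        have hca : Commute ((T (N i)).restrict (hNmapsTo i χ)) aR :=
          LinearMap.restrict_commute (hcommNA i) _ _
        have hcb : Commute ((T (N i)).restrict (hNmapsTo i χ)) (χ (x i) • (1 : Module.End ℂ (W χ))) :=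
          Commute.smul_right (Commute.one_right _) _
        exact @Commute.sub_right (Module.End ℂ (W χ)) _ _ _ _ hca hcb
      have hsum' : (T (S i)).restrict (hSmapsTo i χ) + (T (N i)).restrict (hNmapsTo i χ)
          = χ (x i) • (1 : Module.End ℂ (W χ)) + (aR - χ (x i) • (1 : Module.End ℂ (W χ))) := by
        rw [hsum]; abel
      exact aux_jordan_unique hsum' hsss hsss' hnres hnilshift hc1 hc2
    -- restricted product of semisimple parts
    have hrestrS : ((List.ofFn fun i => T (S i)).prod).restrict HS
        = (∏ i, χ (x i)) • (1 : Module.End ℂ (W χ)) := by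
      rw [aux_restrict_ofFn_prod _ (fun i => hSmapsTo i χ) HS]
      rw [congrArg List.ofFn (funext hresS)]
      exact aux_prod_smul_one _
    -- filtration from the lower central series of the shifted weight space
    have hgT : ∀ (i : Fin k) (j : ℕ),
        ∀ v ∈ (fun j => Submodule.comap
            ((LieModule.shiftedGenWeightSpace.shift ℂ L (Fin n → ℂ) χ :
              (LieModule.genWeightSpace (Fin n → ℂ) χ) ≃ₗ[ℂ]
                LieModule.shiftedGenWeightSpace ℂ L (Fin n → ℂ) χ) :
              (LieModule.genWeightSpace (Fin n → ℂ) χ) →ₗ[ℂ]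
                LieModule.shiftedGenWeightSpace ℂ L (Fin n → ℂ) χ)
            (LieModule.lowerCentralSeries ℂ L
              (LieModule.shiftedGenWeightSpace ℂ L (Fin n → ℂ) χ) j).toSubmodule) j,
          ((T (ρ (x i))).restrict (hWmapsTo χ (x i))) v - χ (x i) • v ∈ (fun j => Submodule.comap
            ((LieModule.shiftedGenWeightSpace.shift ℂ L (Fin n → ℂ) χ :
              (LieModule.genWeightSpace (Fin n → ℂ) χ) ≃ₗ[ℂ]
                LieModule.shiftedGenWeightSpace ℂ L (Fin n → ℂ) χ) :
              (LieModule.genWeightSpace (Fin n → ℂ) χ) →ₗ[ℂ]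
                LieModule.shiftedGenWeightSpace ℂ L (Fin n → ℂ) χ)
            (LieModule.lowerCentralSeries ℂ L
              (LieModule.shiftedGenWeightSpace ℂ L (Fin n → ℂ) χ) j).toSubmodule) (j + 1) := by
      intro i j v hv
      rw [Submodule.mem_comap] at hv ⊢
      set e := LieModule.shiftedGenWeightSpace.shift ℂ L (Fin n → ℂ) χ
      have h1 : (LieModule.toEnd ℂ L (LieModule.shiftedGenWeightSpace ℂ L (Fin n → ℂ) χ) (x i))
          (e v) ∈ LieModule.lowerCentralSeries ℂ L
            (LieModule.shiftedGenWeightSpace ℂ L (Fin n → ℂ) χ) (j + 1) := by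
        rw [LieModule.lowerCentralSeries_succ]
        exact LieSubmodule.lie_mem_lie (LieSubmodule.mem_top (x i)) hv
      have h2 : (LieModule.toEnd ℂ L (LieModule.shiftedGenWeightSpace ℂ L (Fin n → ℂ) χ) (x i))
          (e v) = e ((LieModule.toEnd ℂ L (LieModule.genWeightSpace (Fin n → ℂ) χ) (x i)) v
            - χ (x i) • v) := by
        rw [LieModule.shiftedGenWeightSpace.toEnd_eq]
        simp only [LinearEquiv.conj_apply]
        rfl
      rw [h2] at h1
      rw [hrestrict_toEnd i]
      exact h1
    obtain ⟨m, hm⟩ := LieModule.IsNilpotent.nilpotent (R := ℂ) (L := L)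
      (M := LieModule.shiftedGenWeightSpace ℂ L (Fin n → ℂ) χ)
    have htraceρ := aux_trace_ofFn_prod
      (F := fun j => Submodule.comap
        ((LieModule.shiftedGenWeightSpace.shift ℂ L (Fin n → ℂ) χ :
          (LieModule.genWeightSpace (Fin n → ℂ) χ) ≃ₗ[ℂ]
            LieModule.shiftedGenWeightSpace ℂ L (Fin n → ℂ) χ) :
          (LieModule.genWeightSpace (Fin n → ℂ) χ) →ₗ[ℂ]
            LieModule.shiftedGenWeightSpace ℂ L (Fin n → ℂ) χ)
        (LieModule.lowerCentralSeries ℂ L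
          (LieModule.shiftedGenWeightSpace ℂ L (Fin n → ℂ) χ) j).toSubmodule)
      (fun j => Submodule.comap_mono
        (by exact_mod_cast LieModule.antitone_lowerCentralSeries ℂ L _ (Nat.le_succ j)))
      (by
        ext v
        simp [LieModule.lowerCentralSeries_zero])
      (m := m)
      (by
        ext v
        simp [hm, LieSubmodule.bot_toSubmodule])
      (fun i => χ (x i))
      (fun i => (T (ρ (x i))).restrict (hWmapsTo χ (x i)))
      hgT
    rw [aux_restrict_ofFn_prod _ (fun i => hWmapsTo χ (x i)) HA, hrestrS,
      map_smul, LinearMap.trace_one, smul_eq_mul]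
    exact htraceρ
  -- assemble over the weight-space decomposition
  have hindep : iSupIndep W := by
    have h := LieModule.iSupIndep_genWeightSpace ℂ L (Fin n → ℂ)
    rwa [← LieSubmodule.iSupIndep_toSubmodule] at h
  have htop : ⨆ χ, W χ = ⊤ := by
    have h := LieModule.iSup_genWeightSpace_eq_top ℂ L (Fin n → ℂ)
    calc ⨆ χ, W χ
        = ((⨆ χ, LieModule.genWeightSpace (Fin n → ℂ) χ :
            LieSubmodule ℂ L (Fin n → ℂ))).toSubmodule :=
          (LieSubmodule.iSup_toSubmodule _).symm
      _ = ⊤ := by rw [h]; exact LieSubmodule.top_toSubmodule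
  have hds : DirectSum.IsInternal W :=
    DirectSum.isInternal_submodule_of_iSupIndep_of_iSup_eq_top hindep htop
  have hfinW : {χ : L → ℂ | W χ ≠ ⊥}.Finite := by
    apply (LieModule.finite_genWeightSpace_ne_bot ℂ L (Fin n → ℂ)).subset
    intro χ hχ
    simp only [Set.mem_setOf_eq] at hχ ⊢
    intro hbot
    apply hχ
    show (LieModule.genWeightSpace (Fin n → ℂ) χ).toSubmodule = ⊥
    rw [hbot]
    exact LieSubmodule.bot_toSubmodule
  have hAprod : ∀ χ : L → ℂ,
      Set.MapsTo ((List.ofFn fun i => T (ρ (x i))).prod) (W χ) (W χ) :=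
    fun χ => aux_mapsTo_ofFn_prod _ (fun i => hWmapsTo χ (x i))
  have hSprod : ∀ χ : L → ℂ,
      Set.MapsTo ((List.ofFn fun i => T (S i)).prod) (W χ) (W χ) :=
    fun χ => aux_mapsTo_ofFn_prod _ (fun i => hSmapsTo i χ)
  have hconvρ : Matrix.trace ((List.ofFn fun i => ρ (x i)).prod)
      = LinearMap.trace ℂ (Fin n → ℂ) ((List.ofFn fun i => T (ρ (x i))).prod) := by
    rw [show ((List.ofFn fun i => T (ρ (x i))).prod)
        = T ((List.ofFn fun i => ρ (x i)).prod) from by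
      rw [map_list_prod, List.map_ofFn]; rfl]
    rw [aux_trace_toLinAlgEquiv']
  have hconvS : Matrix.trace ((List.ofFn fun i => S i).prod)
      = LinearMap.trace ℂ (Fin n → ℂ) ((List.ofFn fun i => T (S i)).prod) := by
    rw [show ((List.ofFn fun i => T (S i)).prod)
        = T ((List.ofFn fun i => S i).prod) from by
      rw [map_list_prod, List.map_ofFn]; rfl]
    rw [aux_trace_toLinAlgEquiv']
  rw [hconvρ, hconvS]
  rw [LinearMap.trace_eq_sum_trace_restrict' hds hfinW hAprod]
  rw [LinearMap.trace_eq_sum_trace_restrict' hds hfinW hSprod]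
  exact Finset.sum_congr rfl fun χ _ => main χ (hAprod χ) (hSprod χ)
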